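/- arXiv:2305.08168 — 4 statements merged into one kernel-verified Lean document; each statement's English description precedes it below -/
import Mathlib

section
/- The restricted wreath product ℤ ≀ ℤ is an ICC group: every nontrivial conjugacy class is infinite. -/
/-- The shift automorphism of `⊕_{i∈ℤ} ℤ` by `t`. -/
def wreathShift (t : ℤ) : (ℤ →₀ ℤ) ≃+ (ℤ →₀ ℤ) :=
  Finsupp.domCongr (Equiv.addRight t)

/-- The action of `ℤ` on `⊕_{i∈ℤ} ℤ` by shifting coordinates. -/
noncomputable def wreathPhi : Multiplicative ℤ →* MulAut (Multiplicative (ℤ →₀ ℤ)) :=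
  MonoidHom.mk' (fun t => AddEquiv.toMultiplicative (wreathShift t.toAdd))
    (by
      intro a b
      have key : wreathShift ((a * b).toAdd)
          = (wreathShift b.toAdd).trans (wreathShift a.toAdd) := by
        apply AddEquiv.ext; intro l
        apply Finsupp.ext; intro i
        simp [wreathShift, Finsupp.domCongr, Finsupp.equivMapDomain_apply, Equiv.Perm.mul_def,
          Equiv.symm_trans_apply, sub_sub, add_comm]
        congr 1
        ring
      apply MulEquiv.ext; intro f
      show AddEquiv.toMultiplicative (wreathShift ((a * b).toAdd)) f = _
      rw [key]
      rfl)

/-- The restricted wreath product `ℤ ≀ ℤ = (⊕_{i∈ℤ} ℤ) ⋊ ℤ`. -/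
abbrev ZwrZ := SemidirectProduct (Multiplicative (ℤ →₀ ℤ)) (Multiplicative ℤ) wreathPhi

lemma wreathPhi_apply (r : Multiplicative ℤ) (x : Multiplicative (ℤ →₀ ℤ)) :
    wreathPhi r x = Multiplicative.ofAdd (wreathShift r.toAdd x.toAdd) := rfl

lemma wreathShift_apply (t : ℤ) (f : ℤ →₀ ℤ) (i : ℤ) : wreathShift t f i = f (i - t) := by
  simp [wreathShift, sub_eq_add_neg]

lemma conjA_left (g : ZwrZ) (n : ℤ) (i : ℤ) :
    ((SemidirectProduct.inl (Multiplicative.ofAdd (Finsupp.single n 1)) : ZwrZ) * g *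
      (SemidirectProduct.inl (Multiplicative.ofAdd (Finsupp.single n 1)) : ZwrZ)⁻¹).left.toAdd i
    = Finsupp.single n 1 i + g.left.toAdd i - Finsupp.single (n + g.right.toAdd) 1 i := by
  simp [mul_assoc, wreathPhi_apply, wreathShift_apply, Finsupp.single_apply, sub_eq_add_neg]
  split_ifs <;> (try ring_nf) <;> omega

lemma conjB_left (g : ZwrZ) (s : ℤ) :
    ((SemidirectProduct.inr (Multiplicative.ofAdd s) : ZwrZ) * g *
      (SemidirectProduct.inr (Multiplicative.ofAdd s) : ZwrZ)⁻¹).left.toAdd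
    = wreathShift s g.left.toAdd := by
  simp [mul_assoc, wreathPhi_apply]

/-- The restricted wreath product `ℤ ≀ ℤ` is an ICC group: every nontrivial conjugacy
class is infinite. -/
theorem stmt_10 :
    ∀ g : ZwrZ, g ≠ 1 → (Set.range fun h : ZwrZ => h * g * h⁻¹).Infinite := by
  intro g hg
  set f := Multiplicative.toAdd g.left with hfdef
  set t := Multiplicative.toAdd g.right with htdef
  by_cases hf : f = 0
  · -- then `t ≠ 0`; conjugate by the generators of the base group
    have ht : t ≠ 0 := by
      intro ht0
      exact hg (SemidirectProduct.ext (Multiplicative.toAdd.injective hf)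
        (Multiplicative.toAdd.injective ht0))
    apply Set.infinite_of_injective_forall_mem
      (f := fun n : ℤ => (SemidirectProduct.inl (Multiplicative.ofAdd (Finsupp.single n 1)) : ZwrZ)
        * g * (SemidirectProduct.inl (Multiplicative.ofAdd (Finsupp.single n 1)) : ZwrZ)⁻¹)
    · intro n m hnm
      have h1 := congrArg (fun x : ZwrZ => (Multiplicative.toAdd x.left) n) hnm
      simp only [conjA_left, ← htdef, ← hfdef] at h1
      simp only [Finsupp.single_apply] at h1
      split_ifs at h1 <;> omega
    · intro n
      exact ⟨_, rfl⟩
  · -- `f ≠ 0`: conjugate by powers of the shift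
    apply Set.infinite_of_injective_forall_mem
      (f := fun s : ℤ => (SemidirectProduct.inr (Multiplicative.ofAdd s) : ZwrZ)
        * g * (SemidirectProduct.inr (Multiplicative.ofAdd s) : ZwrZ)⁻¹)
    · intro s s' hss
      have h1 := congrArg (fun x : ZwrZ => (Multiplicative.toAdd x.left)) hss
      simp only [conjB_left, ← hfdef] at h1
      have hne : f.support.Nonempty := Finsupp.support_nonempty_iff.mpr hf
      set M := f.support.max' hne with hM
      have hMne : f M ≠ 0 := Finsupp.mem_support_iff.mp (f.support.max'_mem hne)
      have key : ∀ a b : ℤ, wreathShift a f = wreathShift b f → a ≤ b := by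
        intro a b hab
        have h2 := congrArg (fun x : ℤ →₀ ℤ => x (M + a)) hab
        simp only [wreathShift_apply] at h2
        have hmem : M + a - b ∈ f.support := by
          rw [Finsupp.mem_support_iff]
          intro h0
          rw [h0] at h2
          simp at h2
          exact hMne h2
        have := f.support.le_max' _ hmem
        omega
      exact le_antisymm (key s s' h1) (key s' s h1.symm)
    · intro s
      exact ⟨_, rfl⟩
end

section
/- The group of finitely supported permutations of ℕ (the finitary symmetric group S_∞) is an ICC group: every nontrivial conjugacy class is infinite. -/
/-- The finitary symmetric group `S_∞`: permutations of `ℕ` moving only finitely many points. -/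
def finitarySymmetricGroup : Subgroup (Equiv.Perm ℕ) where
  carrier := {σ : Equiv.Perm ℕ | {x : ℕ | σ x ≠ x}.Finite}
  one_mem' := by simp
  mul_mem' := by
    intro a b ha hb
    apply (ha.union hb).subset
    intro x hx
    simp only [Set.mem_setOf_eq, Set.mem_union]
    by_contra h
    push_neg at h
    exact hx (by simp [Equiv.Perm.mul_apply, h.1, h.2])
  inv_mem' := by
    intro a ha
    apply ha.subset
    intro x hx
    simp only [Set.mem_setOf_eq] at hx ⊢
    intro h
    apply hx
    conv_lhs => rw [← h]
    simp

lemma swap_mem_fsg (a n : ℕ) : Equiv.swap a n ∈ finitarySymmetricGroup := by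
  apply ((Set.finite_singleton n).insert a).subset
  intro x hx
  by_contra h
  simp only [Set.mem_insert_iff, Set.mem_singleton_iff, not_or] at h
  exact hx (Equiv.swap_apply_of_ne_of_ne h.1 h.2)

/-- The finitary symmetric group `S_∞` on `ℕ` is an ICC group: every nontrivial
conjugacy class is infinite. -/
theorem stmt_11 :
    ∀ g : finitarySymmetricGroup, g ≠ 1 →
      (Set.range fun h : finitarySymmetricGroup => h * g * h⁻¹).Infinite := by
  intro g hg
  have hgne : (g : Equiv.Perm ℕ) ≠ 1 := fun h => hg (Subtype.ext h)
  obtain ⟨a, ha⟩ : ∃ a, (g : Equiv.Perm ℕ) a ≠ a := by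
    by_contra h; push_neg at h
    exact hgne (Equiv.ext h)
  set b := (g : Equiv.Perm ℕ) a with hb
  set S : Set ℕ := {x | (g : Equiv.Perm ℕ) x ≠ x} ∪ {a, b} with hSdef
  have hS : S.Finite := g.2.union ((Set.finite_singleton b).insert a)
  haveI : Infinite (Sᶜ : Set ℕ) := hS.infinite_compl.to_subtype
  have hprop : ∀ n : (Sᶜ : Set ℕ), (g : Equiv.Perm ℕ) (n : ℕ) = n ∧ (n : ℕ) ≠ a ∧ (n : ℕ) ≠ b := by
    rintro ⟨n, hn⟩
    simp only [hSdef, Set.mem_compl_iff, Set.mem_union, Set.mem_setOf_eq,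
      Set.mem_insert_iff, Set.mem_singleton_iff, not_or, not_not] at hn
    exact ⟨hn.1, hn.2.1, hn.2.2⟩
  apply Set.infinite_of_injective_forall_mem
    (f := fun n : (Sᶜ : Set ℕ) =>
      (⟨Equiv.swap a n, swap_mem_fsg a n⟩ : finitarySymmetricGroup) * g *
      (⟨Equiv.swap a n, swap_mem_fsg a n⟩ : finitarySymmetricGroup)⁻¹)
  case hf => intro n; exact Set.mem_range_self _
  intro n m hnm
  by_contra hne
  obtain ⟨hgn, hna, hnb⟩ := hprop n
  obtain ⟨hgm, hma, hmb⟩ := hprop m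
  have hval := congrArg (fun σ : finitarySymmetricGroup => (σ : Equiv.Perm ℕ) (n : ℕ)) hnm
  simp only [Subgroup.coe_mul, Equiv.Perm.mul_apply] at hval
  have hinv : ∀ k : ℕ, (((⟨Equiv.swap a k, swap_mem_fsg a k⟩ : finitarySymmetricGroup)⁻¹ :
      finitarySymmetricGroup) : Equiv.Perm ℕ) = Equiv.swap a k := by
    intro k
    simp [Equiv.swap_inv]
  rw [hinv, hinv] at hval
  have hba : b ≠ a := ha
  have hnm' : (n : ℕ) ≠ (m : ℕ) := fun h => hne (Subtype.ext h)
  rw [Equiv.swap_apply_right] at hval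
  rw [Equiv.swap_apply_of_ne_of_ne hna hnm'] at hval
  rw [hgn] at hval
  rw [Equiv.swap_apply_of_ne_of_ne hna hnm'] at hval
  rw [← hb] at hval
  rw [Equiv.swap_apply_of_ne_of_ne hba (Ne.symm hnb)] at hval
  exact hnb hval.symm
end

section
/- Let E be an equivalence relation on (1,∞) such that whenever r E s and u > 0, also (1+(r−1)/u²) E (1+(s−1)/u²). Then the set G = {((r−1)/(s−1))^{1/2} : r, s ∈ (1,∞), r E s} is a subgroup of the multiplicative group of positive reals. -/
/-- If `E` is an equivalence relation on `(1,∞)` invariant under the amplification scaling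
`r ↦ 1 + (r-1)/u²`, then the set of ratios `√((r-1)/(s-1))` for `r E s` is a subgroup
of the multiplicative positive reals. -/
theorem stmt_15 (E : ℝ → ℝ → Prop)
    (hrefl : ∀ r, 1 < r → E r r)
    (hsymm : ∀ r s, 1 < r → 1 < s → E r s → E s r)
    (htrans : ∀ r s u, 1 < r → 1 < s → 1 < u → E r s → E s u → E r u)
    (hscale : ∀ r s, 1 < r → 1 < s → ∀ u : ℝ, 0 < u →
      E r s → E (1 + (r - 1) / u ^ 2) (1 + (s - 1) / u ^ 2)) :
    let G : Set ℝ := {t | ∃ r s : ℝ, 1 < r ∧ 1 < s ∧ E r s ∧ t = Real.sqrt ((r - 1) / (s - 1))}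
    G ⊆ Set.Ioi 0 ∧ (1 : ℝ) ∈ G ∧ (∀ x ∈ G, x⁻¹ ∈ G) ∧ (∀ x ∈ G, ∀ y ∈ G, x * y ∈ G) := by
  intro G
  refine ⟨?_, ?_, ?_, ?_⟩
  · rintro t ⟨r, s, hr, hs, _, rfl⟩
    exact Real.sqrt_pos.2 (div_pos (by linarith) (by linarith))
  · exact ⟨2, 2, one_lt_two, one_lt_two, hrefl 2 one_lt_two, by norm_num⟩
  · rintro x ⟨r, s, hr, hs, hE, rfl⟩
    refine ⟨s, r, hs, hr, hsymm r s hr hs hE, ?_⟩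
    rw [← Real.sqrt_inv, inv_div]
  · rintro x ⟨r, s, hr, hs, hE, rfl⟩ y ⟨r', s', hr', hs', hE', rfl⟩
    set u : ℝ := Real.sqrt ((s - 1) / (r' - 1)) with hu
    have hupos : 0 < u := Real.sqrt_pos.2 (div_pos (by linarith) (by linarith))
    have hu2 : u ^ 2 = (s - 1) / (r' - 1) := Real.sq_sqrt (le_of_lt (div_pos (by linarith) (by linarith)))
    have hs1 : s - 1 ≠ 0 := by linarith
    have hr1 : r' - 1 ≠ 0 := by linarith
    have hs1' : s' - 1 ≠ 0 := by linarith
    have hsu : 1 + (s - 1) / u ^ 2 = r' := by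
      rw [hu2]
      field_simp
      ring
    have hru : 1 < 1 + (r - 1) / u ^ 2 := by
      have : 0 < (r - 1) / u ^ 2 := div_pos (by linarith) (by positivity)
      linarith
    have h1 : E (1 + (r - 1) / u ^ 2) r' := by
      have := hscale r s hr hs u hupos hE
      rwa [hsu] at this
    have h2 : E (1 + (r - 1) / u ^ 2) s' := htrans _ r' s' hru hr' hs' h1 hE'
    refine ⟨_, s', hru, hs', h2, ?_⟩
    have key : (1 + (r - 1) / u ^ 2 - 1) / (s' - 1)
        = ((r - 1) / (s - 1)) * ((r' - 1) / (s' - 1)) := by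
      rw [hu2]
      field_simp
      ring
    rw [key, Real.sqrt_mul (le_of_lt (div_pos (by linarith) (by linarith)))]
end

section
/- Let n ≥ 4 be an even natural number and write n = 2ℓ. Suppose that for every natural number k ≥ 3 there exists a natural number m with k·ℓ^m = n + k − 2. Then this leads to a contradiction; i.e., no even n ≥ 4 satisfies this family of equations. -/
/-- No even `n ≥ 4`, written `n = 2ℓ`, can satisfy `k·ℓ^m = n + k - 2` (for some `m`)
for every `k ≥ 3`. -/
theorem stmt_17 (n ℓ : ℕ) (hn : n = 2 * ℓ) (h4 : 4 ≤ n)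
    (h : ∀ k : ℕ, 3 ≤ k → ∃ m : ℕ, k * ℓ ^ m = n + k - 2) : False := by
  obtain ⟨m, hm⟩ := h n (by omega)
  have hℓ : 2 ≤ ℓ := by omega
  cases m with
  | zero => simp at hm; omega
  | succ m =>
    have h1 : ℓ ^ m ≥ 1 := Nat.one_le_pow _ _ (by omega)
    have h2 : n * ℓ ^ (m + 1) ≥ n * 2 := by
      calc n * ℓ ^ (m + 1) ≥ n * ℓ := Nat.mul_le_mul_left _ (by
        calc ℓ = ℓ * 1 := by ring
        _ ≤ ℓ * ℓ ^ m := Nat.mul_le_mul_left _ h1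
        _ ≤ ℓ ^ (m + 1) := by ring_nf; exact le_refl _)
      _ ≥ n * 2 := Nat.mul_le_mul_left _ hℓ
    omega
end
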